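/- For a bounded linear operator A on a complex Hilbert space, the numerical radius satisfies w(A) ≤ (1/2)·‖ |A| + |A*| ‖, where |A| = (A*A)^(1/2). -/

import Mathlib

set_option synthInstance.maxHeartbeats 1000000
set_option maxHeartbeats 1000000
open ContinuousLinearMap

/-- The numerical radius $w(T)=\sup\{|\langle Tx,x\rangle| : \|x\|=1\}$. -/
noncomputable def numRadius {H : Type*} [NormedAddCommGroup H] [InnerProductSpace ℂ H]
    (T : H →L[ℂ] H) : ℝ :=
  ⨆ x : {x : H // ‖x‖ = 1}, ‖(inner ℂ (T x.1) x.1 : ℂ)‖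

section auxiliary
variable {H : Type*} [NormedAddCommGroup H] [InnerProductSpace ℂ H] [CompleteSpace H]

private lemma inter_pow (A : H →L[ℂ] H) (n : ℕ) :
    A * (adjoint A * A) ^ n = (A * adjoint A) ^ n * A := by
  induction n with
  | zero => simp
  | succ n ih => simp only [pow_succ, ← mul_assoc, ih]

open Polynomial in
private lemma inter_aeval (A : H →L[ℂ] H) (q : ℝ[X]) :
    A * (aeval (adjoint A * A) q) = aeval (A * adjoint A) q * A := by
  induction q using Polynomial.induction_on' with
  | add p q hp hq => simp only [map_add, mul_add, add_mul, hp, hq]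
  | monomial n r =>
    simp only [aeval_monomial]
    rw [← mul_assoc, ← Algebra.commutes r A, mul_assoc, inter_pow A n, ← mul_assoc, mul_assoc]

private lemma spec_mem_Icc [Nontrivial H] (T : H →L[ℂ] H) (hT : 0 ≤ T) {t : ℝ}
    (ht : t ∈ spectrum ℝ T) : t ∈ Set.Icc (0:ℝ) ‖T‖ := by
  have h0 : 0 ≤ t := spectrum_nonneg_of_nonneg hT ht
  refine ⟨h0, ?_⟩
  simpa [abs_of_nonneg h0] using spectrum.norm_le_norm_of_mem ht

/-- The intertwining identity `A · f(A*A) = f(AA*) · A` for continuous `f`. -/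
private lemma inter_cfc [Nontrivial H] (A : H →L[ℂ] H) (f : ℝ → ℝ) (hf : Continuous f) :
    A * cfc f (adjoint A * A) = cfc f (A * adjoint A) * A := by
  have ha : (0 : H →L[ℂ] H) ≤ adjoint A * A := by
    simpa [ContinuousLinearMap.star_eq_adjoint] using star_mul_self_nonneg A
  have ha' : (0 : H →L[ℂ] H) ≤ A * adjoint A := by
    simpa [ContinuousLinearMap.star_eq_adjoint] using mul_star_self_nonneg A
  set a := adjoint A * A with ha_def
  set a' := A * adjoint A with ha'_def
  set M : ℝ := max ‖a‖ ‖a'‖ with hM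
  have key : ∀ ε : ℝ, 0 < ε → ‖A * cfc f a - cfc f a' * A‖ ≤ 2 * ‖A‖ * ε := by
    intro ε hε
    obtain ⟨p, hp⟩ := exists_polynomial_near_of_continuousOn 0 M f hf.continuousOn ε hε
    have hbound : ∀ (T : H →L[ℂ] H), 0 ≤ T → ‖T‖ ≤ M →
        ‖cfc f T - cfc (fun x => p.eval x) T‖ ≤ ε := by
      intro T hT hTM
      rw [← cfc_sub f (fun x => p.eval x) T hf.continuousOn
        (Polynomial.continuous_aeval p).continuousOn]
      refine norm_cfc_le hε.le fun x hx => ?_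
      have hmem := spec_mem_Icc T hT hx
      have := hp x ⟨hmem.1, hmem.2.trans hTM⟩
      rw [Real.norm_eq_abs, abs_sub_comm]
      exact this.le
    have h1 : ‖cfc f a - cfc (fun x => p.eval x) a‖ ≤ ε := hbound a ha (le_max_left _ _)
    have h2 : ‖cfc f a' - cfc (fun x => p.eval x) a'‖ ≤ ε := hbound a' ha' (le_max_right _ _)
    have hpoly : A * cfc (fun x => p.eval x) a = cfc (fun x => p.eval x) a' * A := by
      rw [cfc_polynomial p a (IsSelfAdjoint.of_nonneg ha),
        cfc_polynomial p a' (IsSelfAdjoint.of_nonneg ha')]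
      exact inter_aeval A p
    calc ‖A * cfc f a - cfc f a' * A‖
        = ‖A * (cfc f a - cfc (fun x => p.eval x) a)
            - (cfc f a' - cfc (fun x => p.eval x) a') * A‖ := by
          congr 1
          rw [mul_sub, sub_mul, hpoly]
          abel
      _ ≤ ‖A * (cfc f a - cfc (fun x => p.eval x) a)‖
            + ‖(cfc f a' - cfc (fun x => p.eval x) a') * A‖ := norm_sub_le _ _
      _ ≤ ‖A‖ * ‖cfc f a - cfc (fun x => p.eval x) a‖
            + ‖cfc f a' - cfc (fun x => p.eval x) a'‖ * ‖A‖ :=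
          add_le_add (norm_mul_le _ _) (norm_mul_le _ _)
      _ ≤ ‖A‖ * ε + ε * ‖A‖ := by gcongr
      _ = 2 * ‖A‖ * ε := by ring
  have hle : ‖A * cfc f a - cfc f a' * A‖ ≤ 0 := by
    refine le_of_forall_pos_le_add fun δ hδ => ?_
    have h := key (δ / (2 * ‖A‖ + 1)) (by positivity)
    have h2 : 2 * ‖A‖ * (δ / (2 * ‖A‖ + 1)) ≤ δ := by
      rw [mul_div_assoc', div_le_iff₀ (by positivity)]
      nlinarith [norm_nonneg A]
    linarith
  have := le_antisymm hle (norm_nonneg _)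
  rwa [norm_eq_zero, sub_eq_zero] at this

private lemma sqrt_eq_cfc (T : H →L[ℂ] H) (hT : 0 ≤ T) :
    CFC.sqrt T = cfc Real.sqrt T := by
  have hsa := IsSelfAdjoint.of_nonneg hT
  have hnn : (0 : H →L[ℂ] H) ≤ cfc Real.sqrt T :=
    cfc_nonneg fun x _ => Real.sqrt_nonneg x
  refine CFC.sqrt_unique ?_ hnn
  rw [← cfc_mul Real.sqrt Real.sqrt T Real.continuous_sqrt.continuousOn
    Real.continuous_sqrt.continuousOn]
  rw [cfc_congr (f := fun x => Real.sqrt x * Real.sqrt x) (g := id)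
    fun x hx => Real.mul_self_sqrt (spectrum_nonneg_of_nonneg hT hx)]
  exact cfc_id ℝ T hsa

/-- The mixed Schwarz inequality step: for a unit vector `x`,
`|⟨Ax, x⟩| ≤ (1/2) ‖|A| + |A*|‖`. -/
private lemma key_ineq [Nontrivial H] (A : H →L[ℂ] H) (x : H) (hx : ‖x‖ = 1) :
    ‖(inner ℂ (A x) x : ℂ)‖
      ≤ (1/2) * ‖cfc Real.sqrt (adjoint A * A) + cfc Real.sqrt (A * adjoint A)‖ := by
  have ha : (0 : H →L[ℂ] H) ≤ adjoint A * A := by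
    simpa [ContinuousLinearMap.star_eq_adjoint] using star_mul_self_nonneg A
  have ha' : (0 : H →L[ℂ] H) ≤ A * adjoint A := by
    simpa [ContinuousLinearMap.star_eq_adjoint] using mul_star_self_nonneg A
  have hsa : IsSelfAdjoint (adjoint A * A) := .of_nonneg ha
  have hsa' : IsSelfAdjoint (A * adjoint A) := .of_nonneg ha'
  set a := adjoint A * A with ha_def
  set a' := A * adjoint A with ha'_def
  set B := cfc Real.sqrt a with hB_def
  set C := cfc Real.sqrt a' with hC_def
  have hB0 : (0 : H →L[ℂ] H) ≤ B := cfc_nonneg fun t _ => Real.sqrt_nonneg t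
  have hC0 : (0 : H →L[ℂ] H) ≤ C := cfc_nonneg fun t _ => Real.sqrt_nonneg t
  set b := RCLike.re (inner ℂ (B x) x : ℂ) with hb_def
  set c := RCLike.re (inner ℂ (C x) x : ℂ) with hc_def
  have hb0 : 0 ≤ b := ((nonneg_iff_isPositive B).mp hB0).re_inner_nonneg_left x
  have hc0 : 0 ≤ c := ((nonneg_iff_isPositive C).mp hC0).re_inner_nonneg_left x
  have main : ∀ ε : ℝ, 0 < ε → ‖(inner ℂ (A x) x : ℂ)‖ ^ 2 ≤ (b + ε) * c := by
    intro ε hε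
    have hgpos : ∀ t : ℝ, 0 < Real.sqrt t + ε := fun t => by positivity
    set g : ℝ → ℝ := fun t => (Real.sqrt t + ε)⁻¹ with hg_def
    have hfc : Continuous fun t : ℝ => Real.sqrt t + ε :=
      Real.continuous_sqrt.add continuous_const
    have hgc : Continuous g := hfc.inv₀ fun t => (hgpos t).ne'
    set s : ℝ → ℝ := fun t => Real.sqrt (Real.sqrt t + ε) with hs_def
    have hsc : Continuous s := Real.continuous_sqrt.comp hfc
    set T := cfc (fun t => Real.sqrt t + ε) a with hT_def
    set S := cfc s a with hS_def
    set G := cfc g a with hG_def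
    have hT0 : (0 : H →L[ℂ] H) ≤ T := cfc_nonneg fun t _ => (hgpos t).le
    have hS0 : (0 : H →L[ℂ] H) ≤ S := cfc_nonneg fun t _ => Real.sqrt_nonneg _
    have hTsa : IsSelfAdjoint T := .of_nonneg hT0
    have hSsa : IsSelfAdjoint S := .of_nonneg hS0
    have hTB : T = B + ε • 1 := by
      rw [hT_def, hB_def, cfc_add a Real.sqrt (fun _ => ε) Real.continuous_sqrt.continuousOn
        continuousOn_const, cfc_const ε a hsa, Algebra.algebraMap_eq_smul_one]
    have hTG : T * G = 1 := by
      rw [hT_def, hG_def, ← cfc_mul _ _ a hfc.continuousOn hgc.continuousOn,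
        cfc_congr (g := fun _ => (1:ℝ)) fun t _ => mul_inv_cancel₀ (hgpos t).ne',
        cfc_const_one ℝ a hsa]
    have hSS : S * S = T := by
      rw [hS_def, hT_def, ← cfc_mul _ _ a hsc.continuousOn hsc.continuousOn,
        cfc_congr fun t _ => Real.mul_self_sqrt (hgpos t).le]
    set w := G (adjoint A x) with hw_def
    have hTw : T w = adjoint A x := by
      rw [hw_def, ← ContinuousLinearMap.mul_apply, hTG, ContinuousLinearMap.one_apply]
    have hTmove : ∀ u v : H, (inner ℂ (T u) v : ℂ) = inner ℂ u (T v) := fun u v => by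
      conv_lhs => rw [← isSelfAdjoint_iff'.mp hTsa]
      exact adjoint_inner_left T v u
    have hSmove : ∀ u v : H, (inner ℂ (S u) v : ℂ) = inner ℂ u (S v) := fun u v => by
      conv_lhs => rw [← isSelfAdjoint_iff'.mp hSsa]
      exact adjoint_inner_left S v u
    have hval : (inner ℂ (A x) x : ℂ) = inner ℂ (S x) (S w) := by
      rw [← adjoint_inner_right A x x, ← hTw, ← hSS, ContinuousLinearMap.mul_apply,
        ← hSmove x (S w)]
    have hSx : ‖S x‖ ^ 2 = b + ε := by
      have h1 : (‖S x‖ : ℝ) ^ 2 = RCLike.re (inner ℂ (S x) (S x) : ℂ) :=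
        (inner_self_eq_norm_sq (𝕜 := ℂ) _).symm
      have h2 : (inner ℂ (S x) (S x) : ℂ) = inner ℂ (T x) x := by
        rw [← hSmove (S x) x, ← ContinuousLinearMap.mul_apply, hSS]
      have h3 : (inner ℂ ((ε • (1 : H →L[ℂ] H)) x) x : ℂ) = (ε : ℂ) := by
        rw [ContinuousLinearMap.smul_apply, ContinuousLinearMap.one_apply,
          RCLike.real_smul_eq_coe_smul (K := ℂ), inner_smul_left,
          inner_self_eq_norm_sq_to_K, hx]
        simp
      rw [h1, h2, hTB, ContinuousLinearMap.add_apply, inner_add_left, map_add, h3]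
      simp [hb_def]
    have hD : cfc (fun t => g t * t) a' = cfc g a' * a' := by
      have h := cfc_mul g (fun t => t) a' hgc.continuousOn (continuous_id.continuousOn)
      rw [cfc_id' ℝ a' hsa'] at h
      exact h
    have hDC : cfc (fun t => g t * t) a' ≤ C := by
      rw [hC_def]
      refine cfc_mono (fun t ht => ?_) (hgc.mul continuous_id).continuousOn
        Real.continuous_sqrt.continuousOn
      have ht0 : 0 ≤ t := spectrum_nonneg_of_nonneg ha' ht
      have hss : Real.sqrt t * Real.sqrt t = t := Real.mul_self_sqrt ht0
      rw [hg_def]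
      simp only
      rw [inv_mul_le_iff₀ (hgpos t)]
      nlinarith [Real.sqrt_nonneg t]
    have hSw : ‖S w‖ ^ 2 ≤ c := by
      have h1 : (‖S w‖ : ℝ) ^ 2 = RCLike.re (inner ℂ (S w) (S w) : ℂ) :=
        (inner_self_eq_norm_sq (𝕜 := ℂ) _).symm
      have h2 : (inner ℂ (S w) (S w) : ℂ) = inner ℂ x ((cfc (fun t => g t * t) a') x) := by
        calc (inner ℂ (S w) (S w) : ℂ) = inner ℂ (T w) w := by
              rw [← hSmove (S w) w, ← ContinuousLinearMap.mul_apply, hSS]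
          _ = inner ℂ (adjoint A x) w := by rw [hTw]
          _ = inner ℂ x (A w) := adjoint_inner_left A w x
          _ = inner ℂ x ((cfc (fun t => g t * t) a') x) := by
              rw [hw_def, ← ContinuousLinearMap.mul_apply, inter_cfc A g hgc,
                ContinuousLinearMap.mul_apply, ← ContinuousLinearMap.mul_apply A (adjoint A) x,
                ← ContinuousLinearMap.mul_apply (cfc g (A * adjoint A)) (A * adjoint A) x,
                ← ha'_def, ← hD]
      have h3 : RCLike.re (inner ℂ ((cfc (fun t => g t * t) a') x) x : ℂ) ≤ c := by
        have hpos := ((le_def _ _).mp hDC).re_inner_nonneg_left x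
        rw [ContinuousLinearMap.sub_apply, inner_sub_left, map_sub] at hpos
        linarith
      rw [h1, h2, inner_re_symm]
      exact h3
    have hSw0 : (0:ℝ) ≤ ‖S w‖ := norm_nonneg _
    calc ‖(inner ℂ (A x) x : ℂ)‖ ^ 2 = ‖(inner ℂ (S x) (S w) : ℂ)‖ ^ 2 := by rw [hval]
      _ ≤ (‖S x‖ * ‖S w‖) ^ 2 := by
          gcongr
          exact norm_inner_le_norm _ _
      _ = ‖S x‖ ^ 2 * ‖S w‖ ^ 2 := by ring
      _ ≤ (b + ε) * c := by
          rw [hSx]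
          gcongr
  have hsq : ‖(inner ℂ (A x) x : ℂ)‖ ^ 2 ≤ b * c := by
    refine le_of_forall_pos_le_add fun δ hδ => ?_
    have h := main (δ / (c + 1)) (by positivity)
    have h1 : δ / (c + 1) * c ≤ δ := by
      rw [div_mul_eq_mul_div, div_le_iff₀ (by positivity)]
      nlinarith
    nlinarith
  have habs : ‖(inner ℂ (A x) x : ℂ)‖ ≤ (b + c) / 2 := by
    nlinarith [norm_nonneg (inner ℂ (A x) x : ℂ), sq_nonneg (b - c),
      sq_nonneg (‖(inner ℂ (A x) x : ℂ)‖ + (b + c) / 2)]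
  have hbc : b + c ≤ ‖B + C‖ := by
    have h1 : b + c = RCLike.re (inner ℂ ((B + C) x) x : ℂ) := by
      rw [ContinuousLinearMap.add_apply, inner_add_left, map_add]
    rw [h1]
    calc RCLike.re (inner ℂ ((B + C) x) x : ℂ) ≤ ‖(inner ℂ ((B + C) x) x : ℂ)‖ :=
          RCLike.re_le_norm _
      _ ≤ ‖(B + C) x‖ * ‖x‖ := norm_inner_le_norm _ _
      _ ≤ ‖B + C‖ * ‖x‖ * ‖x‖ := by
          gcongr
          exact le_opNorm _ _
      _ = ‖B + C‖ := by rw [hx]; ring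
  linarith

end auxiliary

theorem stmt13 {H : Type*} [NormedAddCommGroup H] [InnerProductSpace ℂ H] [CompleteSpace H]
    (A : H →L[ℂ] H) :
    numRadius A ≤ (1/2) * ‖CFC.sqrt (adjoint A * A) + CFC.sqrt (A * adjoint A)‖ := by
  have ha : (0 : H →L[ℂ] H) ≤ adjoint A * A := by
    simpa [ContinuousLinearMap.star_eq_adjoint] using star_mul_self_nonneg A
  have ha' : (0 : H →L[ℂ] H) ≤ A * adjoint A := by
    simpa [ContinuousLinearMap.star_eq_adjoint] using mul_star_self_nonneg A
  rw [sqrt_eq_cfc _ ha, sqrt_eq_cfc _ ha']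
  rcases subsingleton_or_nontrivial H with hH | hH
  · have hempty : IsEmpty {x : H // ‖x‖ = 1} := by
      refine ⟨fun y => ?_⟩
      have h0 : y.1 = 0 := Subsingleton.elim _ _
      have h1 := y.2
      rw [h0, norm_zero] at h1
      exact one_ne_zero h1.symm
    rw [numRadius, Real.iSup_of_isEmpty]
    positivity
  · exact Real.iSup_le (fun y => key_ineq A y.1 y.2) (by positivity)
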